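/- Let α ∈ (0,1), n ∈ ℕ with n ≥ 1, and let X₀, X₁, …, Xₙ be i.i.d. real-valued random variables. Let M₀ = |{ i ∈ {1,…,n} : Xᵢ ≤ X₀ }|, and let k = ⌊αn⌋. Then P(M₀ ≤ k) ≤ (k + 1)/(n + 1). -/

import Mathlib

open MeasureTheory ProbabilityTheory
open scoped ENNReal

/-- Deterministic lemma: at most `k + 1` of the values can have rank at most `k`
among the others. -/
lemma rank_det_lemma {N : ℕ} (x : Fin N → ℝ) (k : ℕ) :
    (Finset.univ.filter (fun i : Fin N =>
      (Finset.univ.filter (fun j => j ≠ i ∧ x j ≤ x i)).card ≤ k)).card ≤ k + 1 := by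
  set S := Finset.univ.filter (fun i : Fin N =>
      (Finset.univ.filter (fun j => j ≠ i ∧ x j ≤ x i)).card ≤ k) with hS
  by_cases hne : S.Nonempty
  · obtain ⟨i, hiS, hmax⟩ := S.exists_max_image x hne
    have hsub : S.erase i ⊆ Finset.univ.filter (fun j => j ≠ i ∧ x j ≤ x i) := by
      intro j hj
      rw [Finset.mem_erase] at hj
      exact Finset.mem_filter.2 ⟨Finset.mem_univ _, hj.1, hmax j hj.2⟩
    have h1 : (S.erase i).card ≤ (Finset.univ.filter (fun j => j ≠ i ∧ x j ≤ x i)).card :=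
      Finset.card_le_card hsub
    have h2 : (Finset.univ.filter (fun j => j ≠ i ∧ x j ≤ x i)).card ≤ k :=
      (Finset.mem_filter.1 hiS).2
    have h3 : (S.erase i).card = S.card - 1 := Finset.card_erase_of_mem hiS
    have h4 : 1 ≤ S.card := Finset.card_pos.2 hne
    omega
  · rw [Finset.not_nonempty_iff_eq_empty] at hne
    rw [hne]
    simp

/-- Core estimate in the proof of Theorem 3: for `α ∈ (0,1)`, `n ≥ 1`, i.i.d.
`X₀, X₁, …, Xₙ`, `M₀ = |{i ∈ {1,…,n} : Xᵢ ≤ X₀}|`, and `k = ⌊αn⌋`, one has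
`P(M₀ ≤ k) ≤ (k + 1)/(n + 1)`. -/
theorem rank_probability_bound
    {Ω : Type*} [MeasurableSpace Ω] (μ : Measure Ω) [IsProbabilityMeasure μ]
    (α : ℝ) (hα : α ∈ Set.Ioo (0 : ℝ) 1)
    (n : ℕ) (hn : 1 ≤ n)
    (X : Fin (n + 1) → Ω → ℝ) (hX : ∀ i, Measurable (X i))
    (hindep : iIndepFun X μ)
    (hident : ∀ i, Measure.map (X i) μ = Measure.map (X 0) μ)
    (M₀ : Ω → ℕ)
    (hM₀ : ∀ ω, M₀ ω =
      (Finset.univ.filter (fun i : Fin (n + 1) => i ≠ 0 ∧ X i ω ≤ X 0 ω)).card)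
    (k : ℕ) (hk : k = ⌊α * n⌋₊) :
    (μ {ω | M₀ ω ≤ k}).toReal ≤ ((k : ℝ) + 1) / ((n : ℝ) + 1) := by
  classical
  -- rank functions on the product space
  set F : Fin (n + 1) → (Fin (n + 1) → ℝ) → ℕ :=
    fun i x => (Finset.univ.filter (fun j => j ≠ i ∧ x j ≤ x i)).card with hF_def
  set J : Ω → (Fin (n + 1) → ℝ) := fun ω i => X i ω with hJ_def
  have hJ : Measurable J := measurable_pi_lambda _ hX
  set ν : Measure ℝ := Measure.map (X 0) μ with hν_def
  have hνprob : IsProbabilityMeasure ν := Measure.isProbabilityMeasure_map (hX 0).aemeasurable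
  -- the joint law is the product measure
  have hmap : Measure.pi (fun _ : Fin (n + 1) => ν) = Measure.map J μ := by
    refine Measure.pi_eq fun s hs => ?_
    rw [Measure.map_apply hJ (MeasurableSet.univ_pi hs)]
    have hpre : J ⁻¹' Set.pi Set.univ s = ⋂ i ∈ Finset.univ, X i ⁻¹' s i := by
      ext ω
      simp [Set.mem_pi, hJ_def]
    rw [hpre, hindep.measure_inter_preimage_eq_mul Finset.univ (fun i _ => hs i)]
    refine Finset.prod_congr rfl fun i _ => ?_
    rw [← hident i, Measure.map_apply (hX i) (hs i)]
  -- measurability of the rank functions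
  have hFmeas : ∀ i, Measurable (F i) := by
    intro i
    have heq : F i = fun x => ∑ j : Fin (n + 1), if j ≠ i ∧ x j ≤ x i then 1 else 0 := by
      funext x
      rw [hF_def]
      exact Finset.card_filter _ _
    rw [heq]
    refine Finset.measurable_sum _ fun j _ => ?_
    have hset : MeasurableSet {x : Fin (n + 1) → ℝ | j ≠ i ∧ x j ≤ x i} := by
      by_cases h : j = i
      · simp [h]
      · have : {x : Fin (n + 1) → ℝ | j ≠ i ∧ x j ≤ x i} = {x | x j ≤ x i} := by
          ext x; simp [h]
        rw [this]
        exact measurableSet_le (measurable_pi_apply j) (measurable_pi_apply i)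
    exact Measurable.ite hset measurable_const measurable_const
  have hFset : ∀ i, MeasurableSet {x : Fin (n + 1) → ℝ | F i x ≤ k} :=
    fun i => (hFmeas i) measurableSet_Iic
  -- exchangeability: each rank has the same law
  have hswap : ∀ i : Fin (n + 1), ∀ x : Fin (n + 1) → ℝ,
      F 0 (fun j => x (Equiv.swap 0 i j)) = F i x := by
    intro i x
    set e := Equiv.swap (0 : Fin (n + 1)) i with he
    have h1 : F 0 (fun j => x (e j))
        = (Finset.univ.filter (fun j => j ≠ 0 ∧ x (e j) ≤ x (e 0))).card := by
      simp only [hF_def]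
    have h2 : F i x = (Finset.univ.filter (fun j => j ≠ e 0 ∧ x j ≤ x (e 0))).card := by
      simp only [hF_def, he, Equiv.swap_apply_left]
    rw [h1, h2]
    refine Finset.card_bij' (fun j _ => e j) (fun j _ => e.symm j) ?_ ?_ ?_ ?_
    · intro j hj
      simp only [Finset.mem_filter] at hj ⊢
      exact ⟨Finset.mem_univ _, fun h => hj.2.1 (e.injective h), hj.2.2⟩
    · intro j hj
      simp only [Finset.mem_filter] at hj ⊢
      refine ⟨Finset.mem_univ _, fun h => hj.2.1 ?_, ?_⟩
      · rw [← h, Equiv.apply_symm_apply]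
      · rw [Equiv.apply_symm_apply]
        exact hj.2.2
    · intro j _; exact e.symm_apply_apply j
    · intro j _; exact e.apply_symm_apply j
  have hmeasure_eq : ∀ i : Fin (n + 1),
      μ {ω | F i (J ω) ≤ k} = μ {ω | F 0 (J ω) ≤ k} := by
    intro i
    have hpre : ∀ i : Fin (n + 1), μ {ω | F i (J ω) ≤ k}
        = Measure.map J μ {x | F i x ≤ k} := by
      intro i
      rw [Measure.map_apply hJ (hFset i)]
      rfl
    rw [hpre i, hpre 0, ← hmap]
    -- use the measure-preserving coordinate permutation
    set e := Equiv.swap (0 : Fin (n + 1)) i with he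
    have hsymm : e.symm = e := Equiv.symm_swap 0 i
    have hmp := measurePreserving_piCongrLeft (fun _ : Fin (n + 1) => ν) e
    have hT : ∀ x : Fin (n + 1) → ℝ,
        (MeasurableEquiv.piCongrLeft (fun _ : Fin (n + 1) => ℝ) e) x
          = fun j => x (e j) := by
      intro x
      funext j
      have := MeasurableEquiv.piCongrLeft_apply_apply (β := fun _ : Fin (n+1) => ℝ) e x (e.symm j)
      rw [Equiv.apply_symm_apply] at this
      rw [this, hsymm]
    have hpreim :
        (MeasurableEquiv.piCongrLeft (fun _ : Fin (n + 1) => ℝ) e)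
          ⁻¹' {x | F 0 x ≤ k} = {x | F i x ≤ k} := by
      ext x
      simp only [Set.mem_preimage, Set.mem_setOf_eq, hT x]
      rw [hswap i x]
    rw [← hpreim]
    exact hmp.measure_preimage (hFset 0).nullMeasurableSet
  -- sum over i and use the deterministic lemma
  have hAmeas : ∀ i : Fin (n + 1), MeasurableSet {ω | F i (J ω) ≤ k} :=
    fun i => hJ (hFset i)
  have hsum : ∑ i : Fin (n + 1), μ {ω | F i (J ω) ≤ k} ≤ (k : ℝ≥0∞) + 1 := by
    have h1 : ∀ i : Fin (n + 1), μ {ω | F i (J ω) ≤ k}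
        = ∫⁻ ω, Set.indicator {ω | F i (J ω) ≤ k} (fun _ => 1) ω ∂μ :=
      fun i => (lintegral_indicator_one (hAmeas i)).symm
    calc ∑ i : Fin (n + 1), μ {ω | F i (J ω) ≤ k}
        = ∫⁻ ω, ∑ i : Fin (n + 1),
            Set.indicator {ω | F i (J ω) ≤ k} (fun _ => 1) ω ∂μ := by
          rw [lintegral_finset_sum]
          · exact Finset.sum_congr rfl fun i _ => h1 i
          · exact fun i _ => (measurable_one.indicator (hAmeas i))
      _ ≤ ∫⁻ _ω, ((k : ℝ≥0∞) + 1) ∂μ := by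
          refine lintegral_mono fun ω => ?_
          have hdet := rank_det_lemma (J ω) k
          have hcast : ∑ i : Fin (n + 1),
              Set.indicator {ω | F i (J ω) ≤ k} (fun _ => (1 : ℝ≥0∞)) ω
              = ((Finset.univ.filter (fun i : Fin (n + 1) => F i (J ω) ≤ k)).card
                  : ℝ≥0∞) := by
            rw [Finset.card_filter]
            push_cast
            refine Finset.sum_congr rfl fun i _ => ?_
            by_cases h : F i (J ω) ≤ k <;> simp [Set.indicator_apply, h]
          rw [hcast]
          calc ((Finset.univ.filter (fun i : Fin (n + 1) => F i (J ω) ≤ k)).card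
                  : ℝ≥0∞)
              ≤ ((k + 1 : ℕ) : ℝ≥0∞) := Nat.cast_le.2 hdet
            _ = (k : ℝ≥0∞) + 1 := by push_cast; ring
      _ = (k : ℝ≥0∞) + 1 := by simp
  have hconst : ∑ i : Fin (n + 1), μ {ω | F i (J ω) ≤ k}
      = (n + 1 : ℕ) * μ {ω | F 0 (J ω) ≤ k} := by
    rw [Finset.sum_congr rfl fun i _ => hmeasure_eq i, Finset.sum_const,
      Finset.card_univ, Fintype.card_fin, nsmul_eq_mul]
  have hkey : (n + 1 : ℕ) * μ {ω | F 0 (J ω) ≤ k} ≤ (k : ℝ≥0∞) + 1 := by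
    rw [← hconst]; exact hsum
  -- identify the set with `{ω | M₀ ω ≤ k}`
  have hsets : {ω | M₀ ω ≤ k} = {ω | F 0 (J ω) ≤ k} := by
    ext ω
    simp only [Set.mem_setOf_eq, hM₀ ω, hF_def, hJ_def]
  have hbound : μ {ω | M₀ ω ≤ k} ≤ ((k : ℝ≥0∞) + 1) / ((n : ℝ≥0∞) + 1) := by
    rw [hsets, ENNReal.le_div_iff_mul_le]
    · rw [mul_comm]
      calc ((n : ℝ≥0∞) + 1) * μ {ω | F 0 (J ω) ≤ k}
          = (n + 1 : ℕ) * μ {ω | F 0 (J ω) ≤ k} := by push_cast; ring_nf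
        _ ≤ (k : ℝ≥0∞) + 1 := hkey
    · exact Or.inl (ne_of_gt (lt_of_lt_of_le zero_lt_one le_add_self))
    · left
      exact ENNReal.add_ne_top.2 ⟨ENNReal.natCast_ne_top n, ENNReal.one_ne_top⟩
  have hfin : ((k : ℝ≥0∞) + 1) / ((n : ℝ≥0∞) + 1) ≠ ⊤ := by
    exact (ENNReal.div_lt_top
      (ENNReal.add_ne_top.2 ⟨ENNReal.natCast_ne_top k, ENNReal.one_ne_top⟩)
      (ne_of_gt (lt_of_lt_of_le zero_lt_one le_add_self))).ne
  calc (μ {ω | M₀ ω ≤ k}).toReal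
      ≤ (((k : ℝ≥0∞) + 1) / ((n : ℝ≥0∞) + 1)).toReal :=
        ENNReal.toReal_mono hfin hbound
    _ = ((k : ℝ) + 1) / ((n : ℝ) + 1) := by
        rw [ENNReal.toReal_div]
        congr 1 <;> simp
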